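/- Transitivity of algorithmic subtyping (POPLmark Challenge 1A): if Γ ⊢ S <: Q and Γ ⊢ Q <: T are derivable, then Γ ⊢ S <: T is derivable. -/

import Mathlib

inductive Ty where
  | var : ℕ → Ty
  | top : Ty
  | arrow : Ty → Ty → Ty
  | all : ℕ → Ty → Ty → Ty

abbrev Env := List (ℕ × Ty)

def freeVars : Ty → Finset ℕ
  | .var x => {x}
  | .top => ∅
  | .arrow a b => freeVars a ∪ freeVars b
  | .all x a b => freeVars a ∪ (freeVars b \ {x})

def boundVars (Γ : Env) : Finset ℕ := (Γ.map Prod.fst).toFinset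

/-- A type is well-scoped in Γ if all its free variables are bound in Γ. -/
def WellScoped (Γ : Env) (t : Ty) : Prop := freeVars t ⊆ boundVars Γ

/-- The original algorithmic subtyping system for F<:. -/
inductive Subty : Env → Ty → Ty → Prop where
  | top {Γ S} : WellScoped Γ S → Subty Γ S .top
  | refl {Γ X} : X ∈ boundVars Γ → Subty Γ (.var X) (.var X)
  | trans_tvar {Γ X U T} : (X, U) ∈ Γ → Subty Γ U T → Subty Γ (.var X) T
  | arrow {Γ S₁ S₂ T₁ T₂} : Subty Γ T₁ S₁ → Subty Γ S₂ T₂ →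
      Subty Γ (.arrow S₁ S₂) (.arrow T₁ T₂)
  | all {Γ X S₁ S₂ T₁ T₂} : Subty Γ T₁ S₁ → Subty ((X, T₁) :: Γ) S₂ T₂ →
      Subty Γ (.all X S₁ S₂) (.all X T₁ T₂)

namespace PoplAux

def tsize : Ty → ℕ
  | .var _ => 1
  | .top => 1
  | .arrow a b => tsize a + tsize b + 1
  | .all _ a b => tsize a + tsize b + 1

lemma mem_bv {Γ : Env} {x : ℕ} : x ∈ boundVars Γ ↔ ∃ u, (x, u) ∈ Γ := by
  simp [boundVars, List.mem_map]

lemma bv_mono {Γ Γ' : Env} (h : ∀ p ∈ Γ, p ∈ Γ') : boundVars Γ ⊆ boundVars Γ' := by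
  intro x hx
  rcases mem_bv.1 hx with ⟨u, hu⟩
  exact mem_bv.2 ⟨u, h _ hu⟩

lemma bv_cons (x : ℕ) (u : Ty) (Γ : Env) :
    boundVars ((x, u) :: Γ) = insert x (boundVars Γ) := by
  simp [boundVars]

lemma bv_append (Δ Γ : Env) : boundVars (Δ ++ Γ) = boundVars Δ ∪ boundVars Γ := by
  simp [boundVars]

lemma subty_wf {Γ : Env} {S T : Ty} (h : Subty Γ S T) :
    WellScoped Γ S ∧ WellScoped Γ T := by
  induction h with
  | top hws => exact ⟨hws, by simp [WellScoped, freeVars]⟩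
  | refl hx => exact ⟨by simpa [WellScoped, freeVars] using hx,
      by simpa [WellScoped, freeVars] using hx⟩
  | @trans_tvar Γ X U T hmem _ IH =>
      refine ⟨?_, IH.2⟩
      have : X ∈ boundVars Γ := mem_bv.2 ⟨U, hmem⟩
      simpa [WellScoped, freeVars] using this
  | arrow _ _ IH1 IH2 =>
      constructor
      · simpa [WellScoped, freeVars] using Finset.union_subset IH1.2 IH2.1
      · simpa [WellScoped, freeVars] using Finset.union_subset IH1.1 IH2.2
  | @all Γ X S₁ S₂ T₁ T₂ _ _ IH1 IH2 =>
      have h2 : ∀ V : Ty, WellScoped ((X, T₁) :: Γ) V →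
          freeVars V \ {X} ⊆ boundVars Γ := by
        intro V hV a ha
        rcases Finset.mem_sdiff.1 ha with ⟨ha1, ha2⟩
        have := hV ha1
        rw [bv_cons] at this
        rcases Finset.mem_insert.1 this with h | h
        · exact absurd (Finset.mem_singleton.2 h) ha2
        · exact h
      constructor
      · simpa [WellScoped, freeVars] using Finset.union_subset IH1.2 (h2 _ IH2.1)
      · simpa [WellScoped, freeVars] using Finset.union_subset IH1.1 (h2 _ IH2.2)

lemma weaken {Γ Γ' : Env} {S T : Ty} (h : Subty Γ S T)
    (hsub : ∀ p ∈ Γ, p ∈ Γ') : Subty Γ' S T := by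
  induction h generalizing Γ' with
  | top hws => exact .top (hws.trans (bv_mono hsub))
  | refl hx => exact .refl (bv_mono hsub hx)
  | trans_tvar hmem _ IH => exact .trans_tvar (hsub _ hmem) (IH hsub)
  | arrow _ _ IH1 IH2 => exact .arrow (IH1 hsub) (IH2 hsub)
  | all _ _ IH1 IH2 =>
      refine .all (IH1 hsub) (IH2 ?_)
      intro p hp
      rcases List.mem_cons.1 hp with h | h
      · exact List.mem_cons.2 (Or.inl h)
      · exact List.mem_cons.2 (Or.inr (hsub _ h))

lemma main : ∀ n (Q : Ty), tsize Q = n →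
    (∀ Γ S T, Subty Γ S Q → Subty Γ Q T → Subty Γ S T) ∧
    (∀ Δ Γ X P M N, Subty (Δ ++ (X, Q) :: Γ) M N → Subty Γ P Q →
      Subty (Δ ++ (X, P) :: Γ) M N) := by
  intro n
  induction n using Nat.strong_induction_on with
  | _ n IH =>
    intro Q hn
    have htrans : ∀ Γ S Q' T, Subty Γ S Q' → Q' = Q → Subty Γ Q' T → Subty Γ S T := by
      intro Γ S Q' T h1
      induction h1 generalizing T with
      | top hws =>
          intro hq h2
          cases h2 with
          | top => exact .top hws
      | refl hx => intro _ h2; exact h2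
      | trans_tvar hmem _ IHd =>
          intro hq h2
          exact .trans_tvar hmem (IHd _ hq h2)
      | @arrow Γ S₁ S₂ Q₁ Q₂ hT1S1 hS2T2 _ _ =>
          intro hq h2
          cases h2 with
          | top => exact .top (subty_wf (.arrow hT1S1 hS2T2)).1
          | arrow h1' h2' =>
              subst hq
            




              have s1 : tsize Q₁ < n := by rw [← hn]; simp [tsize]
              have s2 : tsize Q₂ < n := by rw [← hn]; simp [tsize]
              exact .arrow ((IH _ s1 Q₁ rfl).1 _ _ _ h1' hT1S1)
                ((IH _ s2 Q₂ rfl).1 _ _ _ hS2T2 h2')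
      | @all Γ X S₁ S₂ Q₁ Q₂ hQ1S1 hS2Q2 _ _ =>
          intro hq h2
          cases h2 with
          | top => exact .top (subty_wf (.all hQ1S1 hS2Q2)).1
          | @all _ _ _ _ T₁ T₂ hT1Q1 hQ2T2 =>
              subst hq
              have s1 : tsize Q₁ < n := by rw [← hn]; simp [tsize]
              have s2 : tsize Q₂ < n := by rw [← hn]; simp [tsize]
              have t1 : Subty Γ T₁ S₁ := (IH _ s1 Q₁ rfl).1 _ _ _ hT1Q1 hQ1S1
              have narrowed : Subty ((X, T₁) :: Γ) S₂ Q₂ :=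
                (IH _ s1 Q₁ rfl).2 [] Γ X T₁ S₂ Q₂ hS2Q2 hT1Q1
              exact .all t1 ((IH _ s2 Q₂ rfl).1 _ _ _ narrowed hQ2T2)
    refine ⟨fun Γ S T h1 h2 => htrans Γ S Q T h1 rfl h2, ?_⟩
    have hnarrow : ∀ E M N, Subty E M N → ∀ Δ Γ X P, E = Δ ++ (X, Q) :: Γ →
        Subty Γ P Q → Subty (Δ ++ (X, P) :: Γ) M N := by
      intro E M N h
      induction h with
      | top hws =>
          intro Δ Γ X P hE hPQ; subst hE
          refine .top ?_
          refine hws.trans ?_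
          rw [bv_append, bv_append, bv_cons, bv_cons]
      | refl hx =>
          intro Δ Γ X P hE hPQ; subst hE
          refine .refl ?_
          rw [bv_append, bv_cons] at hx ⊢
          exact hx
      | @trans_tvar _ Y U N hmem _ IHd =>
          intro Δ Γ X P hE hPQ; subst hE
          have hUN := IHd Δ Γ X P rfl hPQ
          rcases List.mem_append.1 hmem with h | h
          · exact .trans_tvar (List.mem_append.2 (Or.inl h)) hUN
          · rcases List.mem_cons.1 h with h | h
            · -- h : (Y, U) = (X, Q)
              have hY : Y = X := congrArg Prod.fst h
              have hU : U = Q := congrArg Prod.snd h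
              rw [hU] at hUN
              have hmem' : (Y, P) ∈ Δ ++ (X, P) :: Γ := by
                rw [hY]
                exact List.mem_append.2 (Or.inr List.mem_cons_self)
              have hPQ' : Subty (Δ ++ (X, P) :: Γ) P Q :=
                weaken hPQ (fun p hp =>
                  List.mem_append.2 (Or.inr (List.mem_cons.2 (Or.inr hp))))
              exact .trans_tvar hmem' (htrans _ P Q N hPQ' rfl hUN)
            · exact .trans_tvar
                (List.mem_append.2 (Or.inr (List.mem_cons.2 (Or.inr h)))) hUN
      | arrow _ _ IH1 IH2 =>
          intro Δ Γ X P hE hPQ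
          exact .arrow (IH1 Δ Γ X P hE hPQ) (IH2 Δ Γ X P hE hPQ)
      | @all _ Y S₁ S₂ T₁ T₂ _ _ IH1 IH2 =>
          intro Δ Γ X P hE hPQ
          exact .all (IH1 Δ Γ X P hE hPQ)
            (IH2 ((Y, T₁) :: Δ) Γ X P (by rw [hE]; rfl) hPQ)
    exact fun Δ Γ X P M N h hPQ => hnarrow _ M N h Δ Γ X P rfl hPQ

end PoplAux

theorem sub_trans (Γ : Env) (S Q T : Ty)
    (h1 : Subty Γ S Q) (h2 : Subty Γ Q T) : Subty Γ S T := by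
  exact (PoplAux.main (PoplAux.tsize Q) Q rfl).1 Γ S T h1 h2
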